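/- Let V be a finite-dimensional real vector space and let J₊, J₋ be two complex structures on V (linear endomorphisms with J ∘ J = −id_V). Then the kernel of the commutator [J₊, J₋] = J₊ ∘ J₋ − J₋ ∘ J₊ decomposes as the internal direct sum of the kernels of J₊ − J₋ and of J₊ + J₋; that is, ker(J₊ − J₋) ∩ ker(J₊ + J₋) = {0} and ker [J₊, J₋] = ker(J₊ − J₋) + ker(J₊ + J₋). -/
import Mathlib


/-- For two complex structures `J₊, J₋` on a finite-dimensional real
vector space `V`, the kernel of the commutator `[J₊, J₋]` is the internal direct sum
of `ker (J₊ - J₋)` and `ker (J₊ + J₋)`. -/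
theorem kernel_commutator_decomposition
    (V : Type*) [AddCommGroup V] [Module ℝ V] [FiniteDimensional ℝ V]
    (Jp Jm : V →ₗ[ℝ] V)
    (hJp : Jp ∘ₗ Jp = -LinearMap.id) (hJm : Jm ∘ₗ Jm = -LinearMap.id) :
    LinearMap.ker (Jp - Jm) ⊓ LinearMap.ker (Jp + Jm) = ⊥ ∧
    LinearMap.ker (Jp ∘ₗ Jm - Jm ∘ₗ Jp) =
      LinearMap.ker (Jp - Jm) ⊔ LinearMap.ker (Jp + Jm) := by
  have hp : ∀ v, Jp (Jp v) = -v := fun v => by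
    have := LinearMap.ext_iff.mp hJp v; simpa using this
  have hm : ∀ v, Jm (Jm v) = -v := fun v => by
    have := LinearMap.ext_iff.mp hJm v; simpa using this
  constructor
  · rw [eq_bot_iff]
    rintro v hv
    obtain ⟨h1, h2⟩ := Submodule.mem_inf.mp hv
    rw [LinearMap.mem_ker, LinearMap.sub_apply, sub_eq_zero] at h1
    rw [LinearMap.mem_ker, LinearMap.add_apply, add_eq_zero_iff_eq_neg] at h2
    have h3 : (2 : ℝ) • Jp v = 0 := by
      rw [two_smul]
      nth_rewrite 1 [h1]
      rw [h2, add_neg_cancel]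
    have hJpv : Jp v = 0 := by
      rcases smul_eq_zero.mp h3 with h | h
      · norm_num at h
      · exact h
    have h4 : (-v : V) = 0 := by rw [← hp v, hJpv, map_zero]
    simpa using neg_eq_zero.mp h4
  · apply le_antisymm
    · intro v hv
      rw [LinearMap.mem_ker, LinearMap.sub_apply, sub_eq_zero] at hv
      simp only [LinearMap.comp_apply] at hv
      have key : Jp (Jm (Jp v)) = - Jm v := by rw [← hv, hp]
      have ha : ((1/2 : ℝ) • (v - Jm (Jp v))) ∈ LinearMap.ker (Jp - Jm) := by
        rw [LinearMap.mem_ker, LinearMap.sub_apply, map_smul, map_smul, map_sub, map_sub,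
          key, hm]
        rw [← smul_sub, show Jp v - -Jm v - (Jm v - -Jp v) = 0 by abel, smul_zero]
      have hb : ((1/2 : ℝ) • (v + Jm (Jp v))) ∈ LinearMap.ker (Jp + Jm) := by
        rw [LinearMap.mem_ker, LinearMap.add_apply, map_smul, map_smul, map_add, map_add,
          key, hm, ← smul_add]
        rw [show Jp v + -Jm v + (Jm v + -Jp v) = 0 by abel, smul_zero]
      have hv' : v = (1/2 : ℝ) • (v - Jm (Jp v)) + (1/2 : ℝ) • (v + Jm (Jp v)) := by
        rw [← smul_add, show v - Jm (Jp v) + (v + Jm (Jp v)) = (2:ℝ) • v by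
          rw [two_smul]; abel, smul_smul]
        norm_num
      rw [hv']
      exact Submodule.add_mem_sup ha hb
    · apply sup_le
      · intro v hv
        rw [LinearMap.mem_ker, LinearMap.sub_apply, sub_eq_zero] at hv
        rw [LinearMap.mem_ker, LinearMap.sub_apply]
        simp only [LinearMap.comp_apply]
        rw [← hv, hp, hv, hm]
        simp
      · intro v hv
        rw [LinearMap.mem_ker, LinearMap.add_apply, add_eq_zero_iff_eq_neg] at hv
        rw [LinearMap.mem_ker, LinearMap.sub_apply]
        simp only [LinearMap.comp_apply]
        have hv2 : Jm v = -Jp v := by rw [hv]; simp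
        rw [hv2, map_neg, hp, hv, map_neg, hm]
        simp
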